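/- Let (a_I)_{I∈𝒟} and (b_I)_{I∈𝒟} be families of reals indexed by the dyadic cubes 𝒟 of ℝⁿ. Then there is a uniform constant C with Σ_{I∈𝒟} |a_I||b_I| ≤ C ‖(Σ_{I∈𝒟} |a_I|² |I|^{-1} χ_I)^{1/2}‖_{L¹} · sup_{R∈𝒟} (|R|^{-1} Σ_{I⊆R} |b_I|²)^{1/2}. -/

import Mathlib

open MeasureTheory

/-- The dyadic cube indexed by generation `j` and position `k`:
`{x | ∀ i, k i ≤ 2^j x i < k i + 1}`, of volume `2^{-jn}`. -/
def dyadicCube (n : ℕ) (I : ℤ × (Fin n → ℤ)) : Set (EuclideanSpace ℝ (Fin n)) :=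
  {x | ∀ i, (I.2 i : ℝ) ≤ (2 : ℝ) ^ I.1 * x i ∧ (2 : ℝ) ^ I.1 * x i < (I.2 i : ℝ) + 1}

namespace FJ
variable {n : ℕ}

lemma cube_eq_preimage (I : ℤ × (Fin n → ℤ)) :
    dyadicCube n I = (MeasurableEquiv.toLp 2 (Fin n → ℝ)).symm ⁻¹'
      (Set.univ.pi fun i => Set.Ico ((I.2 i : ℝ) / 2 ^ I.1) (((I.2 i : ℝ) + 1) / 2 ^ I.1)) := by
  ext x
  have h2 : (0:ℝ) < 2 ^ I.1 := zpow_pos two_pos _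
  simp only [dyadicCube, Set.mem_preimage, Set.mem_pi, Set.mem_univ, forall_true_left,
    Set.mem_Ico, Set.mem_setOf_eq]
  have hx : ∀ i, (MeasurableEquiv.toLp 2 (Fin n → ℝ)).symm x i = x i := fun _ => rfl
  refine forall_congr' fun i => ?_
  rw [hx, div_le_iff₀ h2, lt_div_iff₀ h2, mul_comm (x i)]

lemma measurableSet_cube (I : ℤ × (Fin n → ℤ)) : MeasurableSet (dyadicCube n I) := by
  rw [cube_eq_preimage]
  exact (MeasurableSet.univ_pi fun i => measurableSet_Ico).preimage
    (MeasurableEquiv.toLp 2 (Fin n → ℝ)).symm.measurable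

lemma volume_cube (I : ℤ × (Fin n → ℤ)) :
    volume (dyadicCube n I) = ENNReal.ofReal ((2:ℝ) ^ (-I.1)) ^ n := by
  rw [cube_eq_preimage,
    (EuclideanSpace.volume_preserving_symm_measurableEquiv_toLp (Fin n)).measure_preimage
      ((MeasurableSet.univ_pi fun i => measurableSet_Ico).nullMeasurableSet),
    volume_pi_pi]
  have : ∀ i : Fin n, volume (Set.Ico ((I.2 i : ℝ) / 2 ^ I.1) (((I.2 i : ℝ) + 1) / 2 ^ I.1))
      = ENNReal.ofReal ((2:ℝ) ^ (-I.1)) := by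
    intro i
    rw [Real.volume_Ico, div_sub_div_same, add_sub_cancel_left, zpow_neg, one_div]
  simp [this]

lemma cube_nonempty (I : ℤ × (Fin n → ℤ)) : (dyadicCube n I).Nonempty := by
  refine ⟨(WithLp.equiv 2 (Fin n → ℝ)).symm (fun i => (I.2 i : ℝ) / 2 ^ I.1), fun i => ?_⟩
  have h2 : ((2:ℝ) ^ I.1) ≠ 0 := (zpow_pos two_pos _).ne'
  simp only [WithLp.equiv_symm_apply, PiLp.toLp_apply]; rw [mul_div_cancel₀ _ h2]
  constructor <;> simp

lemma volume_cube_pos (I : ℤ × (Fin n → ℤ)) : 0 < volume (dyadicCube n I) := by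
  rw [volume_cube]
  exact ENNReal.pow_pos (ENNReal.ofReal_pos.2 (zpow_pos two_pos _)) n

lemma volume_cube_lt_top (I : ℤ × (Fin n → ℤ)) : volume (dyadicCube n I) < ⊤ := by
  rw [volume_cube]
  exact ENNReal.pow_lt_top ENNReal.ofReal_lt_top

end FJ

namespace FJ
variable {n : ℕ}

lemma coord_key {j j' k k' : ℤ} (h : j' ≤ j) {x : ℝ}
    (hx1 : (k:ℝ) ≤ 2 ^ j * x) (hx2 : 2 ^ j * x < (k:ℝ) + 1)
    (hx1' : (k':ℝ) ≤ 2 ^ j' * x) (hx2' : 2 ^ j' * x < (k':ℝ) + 1) :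
    (k':ℝ) * 2 ^ (j - j') ≤ (k:ℝ) ∧ (k:ℝ) + 1 ≤ ((k':ℝ) + 1) * 2 ^ (j - j') := by
  have hD : (2:ℝ) ^ (j - j') = ((2 ^ (j - j').toNat : ℤ) : ℝ) := by
    push_cast
    rw [← zpow_natCast (2:ℝ), Int.toNat_of_nonneg (sub_nonneg.2 h)]
  have hsplit : (2:ℝ) ^ j = 2 ^ (j - j') * 2 ^ j' := by
    rw [← zpow_add₀ (two_ne_zero) (j - j') j', sub_add_cancel]
  have hDpos : (0:ℝ) < 2 ^ (j - j') := zpow_pos two_pos _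
  have h1 : (k':ℝ) * 2 ^ (j - j') < (k:ℝ) + 1 := by
    calc (k':ℝ) * 2 ^ (j - j') ≤ (2 ^ j' * x) * 2 ^ (j - j') := by
            exact mul_le_mul_of_nonneg_right hx1' hDpos.le
      _ = 2 ^ j * x := by rw [hsplit]; ring
      _ < (k:ℝ) + 1 := hx2
  have h2 : (k:ℝ) < ((k':ℝ) + 1) * 2 ^ (j - j') := by
    calc (k:ℝ) ≤ 2 ^ j * x := hx1
      _ = (2 ^ j' * x) * 2 ^ (j - j') := by rw [hsplit]; ring
      _ < ((k':ℝ) + 1) * 2 ^ (j - j') := by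
            exact mul_lt_mul_of_pos_right hx2' hDpos
  constructor
  · -- integer: k' * 2^d < k + 1 → k' * 2^d ≤ k
    rw [hD] at h1 ⊢
    have : (k' * 2 ^ (j - j').toNat : ℤ) < k + 1 := by exact_mod_cast h1
    exact_mod_cast Int.lt_add_one_iff.1 this
  · rw [hD] at h2 ⊢
    have : (k : ℤ) < (k' + 1) * 2 ^ (j - j').toNat := by exact_mod_cast h2
    exact_mod_cast Int.add_one_le_iff.2 this

lemma subset_of_mem_of_le {I J : ℤ × (Fin n → ℤ)} (h : J.1 ≤ I.1) {x : EuclideanSpace ℝ (Fin n)}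
    (hxI : x ∈ dyadicCube n I) (hxJ : x ∈ dyadicCube n J) : dyadicCube n I ⊆ dyadicCube n J := by
  intro y hy i
  obtain ⟨h1, h2⟩ := coord_key h (hxI i).1 (hxI i).2 (hxJ i).1 (hxJ i).2
  have hDpos : (0:ℝ) < 2 ^ (I.1 - J.1) := zpow_pos two_pos _
  have hsplit : (2:ℝ) ^ I.1 = 2 ^ (I.1 - J.1) * 2 ^ J.1 := by
    rw [← zpow_add₀ (two_ne_zero) (I.1 - J.1) J.1, sub_add_cancel]
  constructor
  · have : (J.2 i : ℝ) * 2 ^ (I.1 - J.1) ≤ (2 ^ J.1 * y i) * 2 ^ (I.1 - J.1) := by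
      calc (J.2 i : ℝ) * 2 ^ (I.1 - J.1) ≤ (I.2 i : ℝ) := h1
        _ ≤ 2 ^ I.1 * y i := (hy i).1
        _ = (2 ^ J.1 * y i) * 2 ^ (I.1 - J.1) := by rw [hsplit]; ring
    exact le_of_mul_le_mul_right this hDpos
  · have : (2 ^ J.1 * y i) * 2 ^ (I.1 - J.1) < ((J.2 i : ℝ) + 1) * 2 ^ (I.1 - J.1) := by
      calc (2 ^ J.1 * y i) * 2 ^ (I.1 - J.1) = 2 ^ I.1 * y i := by rw [hsplit]; ring
        _ < (I.2 i : ℝ) + 1 := (hy i).2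
        _ ≤ ((J.2 i : ℝ) + 1) * 2 ^ (I.1 - J.1) := h2
    exact lt_of_mul_lt_mul_right this hDpos.le

lemma nested_or_disjoint (I J : ℤ × (Fin n → ℤ)) :
    dyadicCube n I ⊆ dyadicCube n J ∨ dyadicCube n J ⊆ dyadicCube n I ∨
      Disjoint (dyadicCube n I) (dyadicCube n J) := by
  by_cases hd : Disjoint (dyadicCube n I) (dyadicCube n J)
  · exact Or.inr (Or.inr hd)
  · obtain ⟨x, hxI, hxJ⟩ := Set.not_disjoint_iff.1 hd
    rcases le_total J.1 I.1 with h | h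
    · exact Or.inl (subset_of_mem_of_le h hxI hxJ)
    · exact Or.inr (Or.inl (subset_of_mem_of_le h hxJ hxI))

lemma eq_of_same_gen {I J : ℤ × (Fin n → ℤ)} (hgen : I.1 = J.1) {x : EuclideanSpace ℝ (Fin n)}
    (hxI : x ∈ dyadicCube n I) (hxJ : x ∈ dyadicCube n J) : I = J := by
  have key : ∀ i, I.2 i = J.2 i := by
    intro i
    have h1 := (coord_key hgen.ge (hxI i).1 (hxI i).2 (hxJ i).1 (hxJ i).2).1
    have h2 := (coord_key hgen.le (hxJ i).1 (hxJ i).2 (hxI i).1 (hxI i).2).1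
    rw [hgen, sub_self, zpow_zero, mul_one] at h1
    rw [hgen, sub_self, zpow_zero, mul_one] at h2
    exact le_antisymm (by exact_mod_cast h2) (by exact_mod_cast h1)
  exact Prod.ext hgen (funext key)

def parent (I : ℤ × (Fin n → ℤ)) : ℤ × (Fin n → ℤ) := (I.1 - 1, fun i => Int.ediv (I.2 i) 2)

lemma subset_parent (I : ℤ × (Fin n → ℤ)) : dyadicCube n I ⊆ dyadicCube n (parent I) := by
  intro x hx i
  obtain ⟨h1, h2⟩ := hx i
  have he : (2:ℤ) * Int.ediv (I.2 i) 2 + Int.emod (I.2 i) 2 = I.2 i := Int.mul_ediv_add_emod _ 2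
  have hm0 : (0:ℤ) ≤ Int.emod (I.2 i) 2 := Int.emod_nonneg _ (by norm_num)
  have hm1 : Int.emod (I.2 i) 2 < 2 := Int.emod_lt_of_pos _ (by norm_num)
  have hpow : (2:ℝ) ^ (I.1 - 1) * x i = (2 ^ I.1 * x i) / 2 := by
    rw [zpow_sub₀ (two_ne_zero) I.1 1, zpow_one]; ring
  have hek : (2:ℝ) * (Int.ediv (I.2 i) 2 : ℝ) ≤ (I.2 i : ℝ) := by
    have : (2:ℤ) * Int.ediv (I.2 i) 2 ≤ I.2 i := by omega
    exact_mod_cast this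
  have hek2 : (I.2 i : ℝ) + 1 ≤ 2 * (Int.ediv (I.2 i) 2 : ℝ) + 2 := by
    have : I.2 i + 1 ≤ 2 * Int.ediv (I.2 i) 2 + 2 := by omega
    exact_mod_cast this
  constructor
  · show (Int.ediv (I.2 i) 2 : ℝ) ≤ _
    rw [parent, hpow, le_div_iff₀ (two_pos)]
    calc (Int.ediv (I.2 i) 2 : ℝ) * 2 = 2 * (Int.ediv (I.2 i) 2 : ℝ) := by ring
      _ ≤ (I.2 i : ℝ) := hek
      _ ≤ 2 ^ I.1 * x i := h1
  · show _ < (Int.ediv (I.2 i) 2 : ℝ) + 1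
    rw [parent, hpow, div_lt_iff₀ (two_pos)]
    calc (2:ℝ) ^ I.1 * x i < (I.2 i : ℝ) + 1 := h2
      _ ≤ 2 * (Int.ediv (I.2 i) 2 : ℝ) + 2 := hek2
      _ = ((Int.ediv (I.2 i) 2 : ℝ) + 1) * 2 := by ring

lemma parentIter_gen (I : ℤ × (Fin n → ℤ)) (m : ℕ) : (parent^[m] I).1 = I.1 - m := by
  induction m with
  | zero => simp
  | succ m ih =>
      rw [Function.iterate_succ_apply']
      show (parent^[m] I).1 - 1 = _
      rw [ih]; push_cast; ring

lemma subset_parentIter (I : ℤ × (Fin n → ℤ)) (m : ℕ) :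
    dyadicCube n I ⊆ dyadicCube n (parent^[m] I) := by
  induction m with
  | zero => simp
  | succ m ih =>
      rw [Function.iterate_succ_apply']
      exact ih.trans (subset_parent _)

end FJ

namespace FJ
variable {n : ℕ}

lemma gen_le_of_subset (hn : n ≠ 0) {I J : ℤ × (Fin n → ℤ)}
    (h : dyadicCube n I ⊆ dyadicCube n J) : J.1 ≤ I.1 := by
  by_contra h'
  push_neg at h'
  have hlt : volume (dyadicCube n J) < volume (dyadicCube n I) := by
    rw [volume_cube, volume_cube]
    refine ENNReal.pow_lt_pow_left hn ?_
    rw [ENNReal.ofReal_lt_ofReal_iff (zpow_pos two_pos _)]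
    exact zpow_lt_zpow_right₀ one_lt_two (by omega)
  exact absurd (measure_mono h) (not_le.2 hlt)

lemma exists_parentIter_of_subset (hn : n ≠ 0) {I J : ℤ × (Fin n → ℤ)}
    (h : dyadicCube n I ⊆ dyadicCube n J) : ∃ m : ℕ, J = parent^[m] I := by
  have hle : J.1 ≤ I.1 := gen_le_of_subset hn h
  refine ⟨(I.1 - J.1).toNat, ?_⟩
  obtain ⟨x, hx⟩ := cube_nonempty I
  have hgen : J.1 = (parent^[(I.1 - J.1).toNat] I).1 := by
    rw [parentIter_gen, Int.toNat_of_nonneg (sub_nonneg.2 hle)]; ring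
  exact eq_of_same_gen hgen (h hx) (subset_parentIter I _ hx)

lemma exists_maximal (hn : n ≠ 0) (G : Set (ℤ × (Fin n → ℤ))) (V : ENNReal) (hV : V ≠ ⊤)
    (hG : ∀ J ∈ G, volume (dyadicCube n J) ≤ V) {I : ℤ × (Fin n → ℤ)} (hI : I ∈ G) :
    ∃ M ∈ G, dyadicCube n I ⊆ dyadicCube n M ∧
      ∀ J ∈ G, dyadicCube n M ⊆ dyadicCube n J → J = M := by
  classical
  obtain ⟨N, hN⟩ := exists_nat_gt V.toReal
  set m₀ : ℕ := N + I.1.toNat + 1 with hm₀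
  have hbd : ∀ m : ℕ, parent^[m] I ∈ G → m ≤ m₀ := by
    intro m hm
    by_contra hm'
    push_neg at hm'
    have hV' : V < volume (dyadicCube n (parent^[m] I)) := by
      rw [volume_cube, parentIter_gen]
      have h1 : (N:ℤ) ≤ (m:ℤ) - I.1 := by
        have := Int.self_le_toNat I.1
        omega
      have h2 : (V.toReal) < (2:ℝ) ^ (-(I.1 - (m:ℤ))) := by
        calc V.toReal < (N:ℝ) := hN
          _ ≤ (2:ℝ) ^ (N:ℤ) := by
              have := Nat.lt_two_pow_self (n := N)
              have : (N:ℝ) ≤ 2 ^ (N:ℕ) := by exact_mod_cast this.le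
              rwa [← zpow_natCast (2:ℝ) N] at this
          _ ≤ (2:ℝ) ^ (-(I.1 - (m:ℤ))) := zpow_le_zpow_right₀ one_le_two (by omega)
      calc V < ENNReal.ofReal ((2:ℝ) ^ (-(I.1 - (m:ℤ)))) :=
            (ENNReal.lt_ofReal_iff_toReal_lt hV).2 h2
        _ ≤ ENNReal.ofReal ((2:ℝ) ^ (-(I.1 - (m:ℤ)))) ^ n := by
            refine le_self_pow₀ ?_ hn
            rw [ENNReal.one_le_ofReal]
            exact one_le_zpow₀ one_le_two (by omega)
    exact absurd (hG _ hm) (not_le.2 hV')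
  set P : ℕ → Prop := fun m => parent^[m] I ∈ G with hP
  set m' : ℕ := Nat.findGreatest P m₀ with hm'
  have hPm' : P m' := Nat.findGreatest_spec (Nat.zero_le m₀) (by simpa [hP] using hI)
  refine ⟨parent^[m'] I, hPm', subset_parentIter I m', ?_⟩
  intro J hJ hMJ
  obtain ⟨p, hp⟩ := exists_parentIter_of_subset hn hMJ
  rw [← Function.iterate_add_apply] at hp
  have hpT : P (p + m') := by rw [hP]; rw [hp] at hJ; exact hJ
  have := Nat.le_findGreatest (hbd _ (by simpa [hP] using hpT)) hpT
  have hp0 : p = 0 := by omega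
  rw [hp0] at hp
  simpa using hp

end FJ

namespace FJ

lemma two_zpow_ne_top (k : ℤ) : ((2:ENNReal) ^ k) ≠ ⊤ :=
  (ENNReal.zpow_lt_top (by norm_num) ENNReal.ofNat_ne_top k).ne

lemma two_zpow_ne_zero (k : ℤ) : ((2:ENNReal) ^ k) ≠ 0 :=
  (ENNReal.zpow_pos (by norm_num) ENNReal.ofNat_ne_top k).ne'

/-- Cauchy–Schwarz for finite sums in `ℝ≥0∞`. -/
lemma finset_cauchy_schwarz {ι : Type*} (s : Finset ι) (f g : ι → ENNReal) :
    ∑ i ∈ s, f i * g i ≤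
      (∑ i ∈ s, f i ^ 2) ^ (1/2:ℝ) * (∑ i ∈ s, g i ^ 2) ^ (1/2:ℝ) := by
  classical
  letI : MeasurableSpace ↥s := ⊤
  haveI : MeasurableSingletonClass ↥s := ⟨fun _ => trivial⟩
  have hol := ENNReal.lintegral_mul_le_Lp_mul_Lq (Measure.count : Measure ↥s)
    (p := 2) (q := 2) ⟨by norm_num, by norm_num, by norm_num⟩
    (f := fun i => f i.1) (g := fun i => g i.1)
    measurable_from_top.aemeasurable measurable_from_top.aemeasurable
  simp only [Pi.mul_apply] at hol
  rw [lintegral_count] at hol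
  have h2 : ∀ h : ι → ENNReal,
      (∫⁻ (a : ↥s), h a.1 ^ (2:ℝ) ∂Measure.count) = ∑ i ∈ s, h i ^ 2 := by
    intro h
    rw [lintegral_count, ← Finset.tsum_subtype s (fun i => h i ^ 2)]
    congr 1
    ext a
    rw [← ENNReal.rpow_natCast (h a.1) 2]
    norm_num
  rw [h2 f, h2 g] at hol
  rw [← Finset.tsum_subtype s (fun i => f i * g i)]
  exact hol

/-- finite geometric-type sum over distinct integers all `≤ K`. -/
lemma finset_zpow_sum_le (s : Finset ℤ) (K : ℤ) (hs : ∀ k ∈ s, k ≤ K) :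
    ∑ k ∈ s, (2:ENNReal) ^ k ≤ 2 ^ (K + 1) := by
  classical
  rcases s.eq_empty_or_nonempty with rfl | hne
  · simp
  set M : ℕ := ((K - s.min' hne).toNat + 1) with hM
  have hsub : s ⊆ (Finset.range M).image (fun m : ℕ => K - (m:ℤ)) := by
    intro k hk
    refine Finset.mem_image.2 ⟨(K - k).toNat, Finset.mem_range.2 ?_, ?_⟩
    · have h1 : s.min' hne ≤ k := s.min'_le k hk
      have h2 : k ≤ K := hs k hk
      omega
    · have h2 : k ≤ K := hs k hk
      omega
  calc ∑ k ∈ s, (2:ENNReal) ^ k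
      ≤ ∑ k ∈ (Finset.range M).image (fun m : ℕ => K - (m:ℤ)), (2:ENNReal) ^ k :=
        Finset.sum_le_sum_of_subset hsub
    _ = ∑ m ∈ Finset.range M, (2:ENNReal) ^ (K - (m:ℤ)) := by
        rw [Finset.sum_image (by intro x _ y _ h; simp only at h; omega)]
    _ = ∑ m ∈ Finset.range M, (2:ENNReal) ^ K * (2⁻¹) ^ m := by
        refine Finset.sum_congr rfl fun m _ => ?_
        rw [sub_eq_add_neg, ENNReal.zpow_add (by norm_num) ENNReal.ofNat_ne_top,
          ENNReal.zpow_neg, zpow_natCast,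
          ENNReal.inv_pow]
    _ = (2:ENNReal) ^ K * ∑ m ∈ Finset.range M, (2⁻¹) ^ m := by
        rw [Finset.mul_sum]
    _ ≤ (2:ENNReal) ^ K * ∑' m : ℕ, (2⁻¹) ^ m :=
        mul_le_mul_right (ENNReal.sum_le_tsum _) _
    _ = (2:ENNReal) ^ K * 2 := by
        rw [ENNReal.tsum_geometric, ENNReal.one_sub_inv_two, inv_inv]
    _ = 2 ^ (K + 1) := by
        rw [ENNReal.zpow_add (by norm_num) ENNReal.ofNat_ne_top, zpow_one]

end FJ

namespace FJ
variable {n : ℕ}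

lemma cube_univ (hn : n = 0) (I : ℤ × (Fin n → ℤ)) : dyadicCube n I = Set.univ := by
  subst hn
  exact Set.eq_univ_of_forall fun x i => i.elim0

lemma cover (A : Finset (ℤ × (Fin n → ℤ))) (Ω : Set (EuclideanSpace ℝ (Fin n)))
    (hΩm : MeasurableSet Ω) (hΩfin : volume Ω ≠ ⊤)
    (hA : ∀ I ∈ A, volume (dyadicCube n I) / 2 < volume (dyadicCube n I ∩ Ω)) :
    ∃ Mf : (ℤ × (Fin n → ℤ)) → (ℤ × (Fin n → ℤ)),
      (∀ I ∈ A, dyadicCube n I ⊆ dyadicCube n (Mf I)) ∧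
      (A.Nonempty → ∑ M ∈ A.image Mf, volume (dyadicCube n M) ≤ 2 * volume Ω) := by
  classical
  by_cases hn : n = 0
  · subst hn
    refine ⟨fun _ => (0, fun _ => 0), fun I _ => by
      rw [cube_univ rfl I, cube_univ rfl (0, fun _ => 0)], ?_⟩
    intro hne
    obtain ⟨I, hI⟩ := hne
    have h1 : volume (dyadicCube 0 I) = 1 := by rw [volume_cube, pow_zero]
    have h2 := (hA I hI).trans_le (measure_mono Set.inter_subset_right)
    rw [h1] at h2
    have h3 : (1:ENNReal) ≤ 2 * volume Ω := by
      have := (ENNReal.div_lt_iff (Or.inl (by norm_num)) (Or.inl ENNReal.ofNat_ne_top)).1 h2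
      calc (1:ENNReal) ≤ volume Ω * 2 := this.le
        _ = 2 * volume Ω := mul_comm _ _
    rw [Finset.image_const ⟨I, hI⟩]
    simpa [volume_cube] using h3
  · set G : Set (ℤ × (Fin n → ℤ)) :=
      {J | volume (dyadicCube n J) / 2 < volume (dyadicCube n J ∩ Ω)} with hG
    have hGV : ∀ J ∈ G, volume (dyadicCube n J) ≤ 2 * volume Ω := by
      intro J hJ
      have h2 : volume (dyadicCube n J) / 2 ≤ volume Ω :=
        (hJ.trans_le (measure_mono Set.inter_subset_right)).le
      calc volume (dyadicCube n J) = 2 * (volume (dyadicCube n J) / 2) :=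
            (ENNReal.mul_div_cancel' (by norm_num) (by simp)).symm
        _ ≤ 2 * volume Ω := mul_le_mul_right h2 _
    have hVne : (2 : ENNReal) * volume Ω ≠ ⊤ := ENNReal.mul_ne_top ENNReal.ofNat_ne_top hΩfin
    have hmax : ∀ I : ℤ × (Fin n → ℤ), ∃ M, I ∈ G →
        (M ∈ G ∧ dyadicCube n I ⊆ dyadicCube n M ∧
          ∀ J ∈ G, dyadicCube n M ⊆ dyadicCube n J → J = M) := by
      intro I
      by_cases hI : I ∈ G
      · obtain ⟨M, hM1, hM2, hM3⟩ := exists_maximal hn G (2 * volume Ω) hVne hGV hI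
        exact ⟨M, fun _ => ⟨hM1, hM2, hM3⟩⟩
      · exact ⟨I, fun h => absurd h hI⟩
    choose Mf hMf using hmax
    have hAG : ∀ I ∈ A, I ∈ G := fun I hI => hA I hI
    refine ⟨Mf, fun I hI => (hMf I (hAG I hI)).2.1, fun _ => ?_⟩
    have himg : ∀ M ∈ A.image Mf, M ∈ G ∧ ∀ J ∈ G, dyadicCube n M ⊆ dyadicCube n J → J = M := by
      intro M hM
      obtain ⟨I, hI, rfl⟩ := Finset.mem_image.1 hM
      exact ⟨(hMf I (hAG I hI)).1, (hMf I (hAG I hI)).2.2⟩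
    have hdisj : (↑(A.image Mf) : Set (ℤ × (Fin n → ℤ))).PairwiseDisjoint
        (fun M => dyadicCube n M ∩ Ω) := by
      intro M₁ hM₁ M₂ hM₂ hne
      have h₁ := himg M₁ hM₁
      have h₂ := himg M₂ hM₂
      have : Disjoint (dyadicCube n M₁) (dyadicCube n M₂) := by
        rcases nested_or_disjoint M₁ M₂ with h | h | h
        · exact absurd (h₁.2 M₂ h₂.1 h) (Ne.symm hne)
        · exact absurd (h₂.2 M₁ h₁.1 h) hne
        · exact h
      exact (this.mono Set.inter_subset_left Set.inter_subset_left)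
    calc ∑ M ∈ A.image Mf, volume (dyadicCube n M)
        ≤ ∑ M ∈ A.image Mf, 2 * volume (dyadicCube n M ∩ Ω) := by
          refine Finset.sum_le_sum fun M hM => ?_
          have h2 : volume (dyadicCube n M) / 2 < volume (dyadicCube n M ∩ Ω) := (himg M hM).1
          calc volume (dyadicCube n M) = 2 * (volume (dyadicCube n M) / 2) :=
                (ENNReal.mul_div_cancel' (by norm_num) (by simp)).symm
            _ ≤ 2 * volume (dyadicCube n M ∩ Ω) := mul_le_mul_right h2.le _
      _ = 2 * ∑ M ∈ A.image Mf, volume (dyadicCube n M ∩ Ω) := by rw [Finset.mul_sum]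
      _ = 2 * volume (⋃ M ∈ A.image Mf, dyadicCube n M ∩ Ω) := by
          rw [measure_biUnion_finset hdisj
            (fun M _ => (measurableSet_cube M).inter hΩm)]
      _ ≤ 2 * volume Ω := by
          refine mul_le_mul_right (measure_mono ?_) _
          exact Set.iUnion₂_subset fun M _ => Set.inter_subset_right

end FJ

namespace FJ

lemma two_zpow_le {k k' : ℤ} (h : k ≤ k') : (2:ENNReal) ^ k ≤ 2 ^ k' := by
  have : (2:ENNReal) ^ k' = 2 ^ k * 2 ^ (k' - k) := by
    rw [← ENNReal.zpow_add (by norm_num) ENNReal.ofNat_ne_top]; ring_nf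
  rw [this]
  nth_rewrite 1 [← mul_one ((2:ENNReal) ^ k)]
  refine mul_le_mul_right ?_ _
  have h2 : (2:ENNReal) ^ (k' - k) = 2 ^ (k' - k).toNat := by
    rw [← zpow_natCast (2:ENNReal), Int.toNat_of_nonneg (by omega)]
  rw [h2]
  exact one_le_pow_of_one_le' (by norm_num) _

lemma exists_two_zpow_lt {u : ENNReal} (hu : 0 < u) : ∃ k : ℤ, (2:ENNReal) ^ k < u := by
  rcases eq_or_ne u ⊤ with rfl | hut
  · exact ⟨0, by simp⟩
  · have hinv : u⁻¹ ≠ ⊤ := by simp [hu.ne']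
    obtain ⟨m, hm⟩ := ENNReal.exists_nat_gt hinv
    refine ⟨-(m:ℤ), ?_⟩
    have h1 : u⁻¹ < 2 ^ m := hm.trans_le (by exact_mod_cast Nat.cast_le.2 (Nat.lt_two_pow_self (n := m)).le)
    have h2 : ((2:ENNReal) ^ m)⁻¹ < u := by
      rw [← inv_inv u]
      exact ENNReal.inv_lt_inv.2 h1
    rwa [ENNReal.zpow_neg, zpow_natCast]

lemma exists_lt_two_zpow_mul {v w : ENNReal} (hv : v ≠ ⊤) (hw : 0 < w) :
    ∃ K : ℤ, v < 2 ^ K * w := by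
  rcases eq_or_ne w ⊤ with rfl | hwt
  · exact ⟨0, by simp [hv.lt_top, ENNReal.mul_top (by norm_num : (2:ENNReal)^(0:ℤ) ≠ 0)]⟩
  · have hdiv : v / w ≠ ⊤ := by
      simp [ENNReal.div_eq_top, hv, hw.ne']
    obtain ⟨m, hm⟩ := ENNReal.exists_nat_gt hdiv
    refine ⟨(m:ℤ), ?_⟩
    have h1 : v / w < 2 ^ (m:ℤ) := by
      rw [zpow_natCast]
      exact hm.trans_le (by exact_mod_cast Nat.cast_le.2 (Nat.lt_two_pow_self (n := m)).le)
    rwa [ENNReal.div_lt_iff (Or.inl hw.ne') (Or.inl hwt)] at h1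

lemma rpow_half_sq (c : ENNReal) : (c ^ (2:ℕ)) ^ (1/2:ℝ) = c := by
  rw [← ENNReal.rpow_natCast c 2, ← ENNReal.rpow_mul]
  norm_num

lemma sq_rpow_half (c : ENNReal) : (c ^ (1/2:ℝ)) ^ (2:ℕ) = c := by
  rw [← ENNReal.rpow_natCast (c ^ (1/2:ℝ)) 2, ← ENNReal.rpow_mul]
  norm_num

end FJ
section KEY
open FJ
variable {n : ℕ}

lemma key (a b : ℤ × (Fin n → ℤ) → ℝ) (B : ℝ) (hB : 0 ≤ B)
    (hCar : ∀ R : ℤ × (Fin n → ℤ),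
      (∑' I : {I : ℤ × (Fin n → ℤ) // dyadicCube n I ⊆ dyadicCube n R},
          ENNReal.ofReal (b I.1 ^ 2))
        ≤ ENNReal.ofReal (B ^ 2) * volume (dyadicCube n R))
    (F : Finset (ℤ × (Fin n → ℤ))) :
    ∑ I ∈ F, ENNReal.ofReal (|a I| * |b I|) ≤
      ENNReal.ofReal (12 * B) *
        ∫⁻ x, (∑ I ∈ F, (dyadicCube n I).indicator
          (fun _ => ENNReal.ofReal (a I ^ 2) * (volume (dyadicCube n I))⁻¹) x) ^ (1/2:ℝ) := by
  classical
  -- trivial case B = 0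
  by_cases hB0 : B = 0
  · have hb : ∀ I, b I = 0 := by
      intro I
      have h1 : ENNReal.ofReal (b I ^ 2) ≤ ENNReal.ofReal (B ^ 2) * volume (dyadicCube n I) := by
        refine le_trans ?_ (hCar I)
        exact ENNReal.le_tsum (⟨I, subset_rfl⟩ : {J // dyadicCube n J ⊆ dyadicCube n I})
      rw [hB0] at h1
      simp only [ne_eq, OfNat.ofNat_ne_zero, not_false_eq_true, zero_pow, ENNReal.ofReal_zero,
        zero_mul, nonpos_iff_eq_zero, ENNReal.ofReal_eq_zero] at h1
      nlinarith [sq_nonneg (b I), h1]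
    have : ∀ I, ENNReal.ofReal (|a I| * |b I|) = 0 := by
      intro I; rw [hb]; simp
    simp only [this, Finset.sum_const_zero]
    exact zero_le
  have hBpos : 0 < B := lt_of_le_of_ne hB (Ne.symm hB0)
  set q : (ℤ × (Fin n → ℤ)) → ENNReal :=
    fun I => ENNReal.ofReal (a I ^ 2) * (volume (dyadicCube n I))⁻¹ with hqdef
  set fA : (ℤ × (Fin n → ℤ)) → EuclideanSpace ℝ (Fin n) → ENNReal :=
    fun I => (dyadicCube n I).indicator (fun _ => q I) with hfAdef
  set F' : Finset (ℤ × (Fin n → ℤ)) := F.filter (fun I => a I ≠ 0) with hF'def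
  have hLHS : ∑ I ∈ F', ENNReal.ofReal (|a I| * |b I|) = ∑ I ∈ F, ENNReal.ofReal (|a I| * |b I|) := by
    refine Finset.sum_filter_of_ne fun I _ h => ?_
    intro ha
    exact h (by rw [ha]; simp)
  set s2 : EuclideanSpace ℝ (Fin n) → ENNReal := fun x => ∑ I ∈ F', fA I x with hs2def
  set S : EuclideanSpace ℝ (Fin n) → ENNReal := fun x => s2 x ^ (1/2:ℝ) with hSdef
  have hfAm : ∀ I, Measurable (fA I) :=
    fun I => measurable_const.indicator (measurableSet_cube I)
  have hs2m : Measurable s2 := Finset.measurable_sum _ (fun I _ => hfAm I)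
  have hSm : Measurable S := hs2m.pow_const _
  -- suffices to bound by ∫ S
  suffices hkey : ∑ I ∈ F', ENNReal.ofReal (|a I| * |b I|) ≤
      ENNReal.ofReal (12 * B) * ∫⁻ x, S x by
    rw [← hLHS]
    refine hkey.trans (mul_le_mul_right (lintegral_mono fun x => ?_) _)
    refine ENNReal.rpow_le_rpow ?_ (by norm_num)
    exact Finset.sum_le_sum_of_subset (Finset.filter_subset _ _)
  -- trivial case: infinite integral
  by_cases hfin : ∫⁻ x, S x = ⊤
  · rw [hfin, ENNReal.mul_top (by positivity)]
    exact le_top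
  -- main case
  set Ω : ℤ → Set (EuclideanSpace ℝ (Fin n)) := fun k => {x | (2:ENNReal) ^ k < S x} with hΩdef
  have hΩm : ∀ k, MeasurableSet (Ω k) := fun k => measurableSet_lt measurable_const hSm
  have hcheb : ∀ k : ℤ, (2:ENNReal) ^ k * volume (Ω k) ≤ ∫⁻ x, S x := by
    intro k
    refine le_trans ?_ (mul_meas_ge_le_lintegral₀ hSm.aemeasurable ((2:ENNReal) ^ k))
    have hmono : volume (Ω k) ≤ volume {x | (2:ENNReal) ^ k ≤ S x} :=
      measure_mono (fun x hx => le_of_lt (α := ENNReal) hx)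
    exact mul_le_mul_right hmono _
  have hΩfin : ∀ k : ℤ, volume (Ω k) ≠ ⊤ := by
    intro k h
    have := hcheb k
    rw [h, ENNReal.mul_top (two_zpow_ne_zero k)] at this
    exact hfin (top_le_iff.1 this)
  -- pointwise lower bound for S on each cube
  have hpt : ∀ I ∈ F', ∀ x ∈ dyadicCube n I, q I ≤ s2 x := by
    intro I hI x hx
    have : fA I x = q I := Set.indicator_of_mem hx _
    rw [← this]
    exact Finset.single_le_sum (f := fun J => fA J x) (fun J _ => zero_le) hI
  -- stopping time
  have hstop : ∀ I : ℤ × (Fin n → ℤ), ∃ k : ℤ, I ∈ F' →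
      (volume (dyadicCube n I) / 2 < volume (dyadicCube n I ∩ Ω k) ∧
       volume (dyadicCube n I ∩ Ω (k+1)) ≤ volume (dyadicCube n I) / 2) := by
    intro I
    by_cases hI : I ∈ F'
    swap
    · exact ⟨0, fun h => absurd h hI⟩
    have ha : a I ≠ 0 := (Finset.mem_filter.1 hI).2
    have hvol0 : volume (dyadicCube n I) ≠ 0 := (volume_cube_pos I).ne'
    have hvolt : volume (dyadicCube n I) ≠ ⊤ := (volume_cube_lt_top I).ne
    have hqpos : 0 < q I := by
      refine ENNReal.mul_pos ?_ ?_
      · simp only [ne_eq, ENNReal.ofReal_eq_zero, not_le]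
        positivity
      · simp [hvolt]
    have hqtop : q I ≠ ⊤ :=
      ENNReal.mul_ne_top ENNReal.ofReal_ne_top (by simp [hvol0])
    have hupos : 0 < q I ^ (1/2:ℝ) := ENNReal.rpow_pos hqpos hqtop
    set P : ℤ → Prop := fun k => volume (dyadicCube n I) / 2 < volume (dyadicCube n I ∩ Ω k)
      with hPdef
    have hPne : ∃ k, P k := by
      obtain ⟨k₁, hk₁⟩ := exists_two_zpow_lt hupos
      refine ⟨k₁, ?_⟩
      have hsub : dyadicCube n I ⊆ Ω k₁ := by
        intro x hx
        have h1 : q I ≤ s2 x := hpt I hI x hx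
        have h2 : q I ^ (1/2:ℝ) ≤ S x := ENNReal.rpow_le_rpow h1 (by norm_num)
        exact lt_of_lt_of_le hk₁ h2
      have : dyadicCube n I ∩ Ω k₁ = dyadicCube n I := Set.inter_eq_left.2 hsub
      rw [hPdef]
      simp only [this]
      exact ENNReal.half_lt_self hvol0 hvolt
    have hPbdd : ∃ K : ℤ, ∀ z, P z → z ≤ K := by
      have hhalfpos : 0 < volume (dyadicCube n I) / 2 :=
        ENNReal.div_pos hvol0 ENNReal.ofNat_ne_top
      obtain ⟨K, hK⟩ := exists_lt_two_zpow_mul hfin hhalfpos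
      refine ⟨K, fun z hz => ?_⟩
      by_contra h'
      push_neg at h'
      have h1 : (2:ENNReal) ^ z * (volume (dyadicCube n I) / 2) ≤ ∫⁻ x, S x := by
        refine le_trans ?_ (hcheb z)
        refine mul_le_mul_right ?_ _
        exact le_trans hz.le (measure_mono Set.inter_subset_right)
      have h2 : (∫⁻ x, S x) < 2 ^ z * (volume (dyadicCube n I) / 2) := by
        refine hK.trans_le (mul_le_mul_left (two_zpow_le h'.le) _)
      exact absurd (h1.trans_lt h2) (lt_irrefl _)
    obtain ⟨k₀, hk₀P, hk₀max⟩ := Int.exists_greatest_of_bdd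
      (by obtain ⟨K, hK⟩ := hPbdd; exact ⟨K, hK⟩) hPne
    refine ⟨k₀, fun _ => ⟨hk₀P, ?_⟩⟩
    by_contra h'
    push_neg at h'
    exact absurd (hk₀max _ h') (by omega)
  choose kfun hkfun using hstop
  set ks : Finset ℤ := F'.image kfun with hksdef
  set A : ℤ → Finset (ℤ × (Fin n → ℤ)) := fun k => F'.filter (fun I => kfun I = k) with hAdef
  set β : ENNReal := ENNReal.ofReal B with hβdef
  -- per-level estimate
  have perk : ∀ k ∈ ks, ∑ I ∈ A k, ENNReal.ofReal (|a I| * |b I|) ≤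
      6 * ((2:ENNReal) ^ k * (β * volume (Ω k))) := by
    intro k hk
    obtain ⟨I₀, hI₀F, hI₀k⟩ := Finset.mem_image.1 hk
    have hAne : (A k).Nonempty := ⟨I₀, Finset.mem_filter.2 ⟨hI₀F, hI₀k⟩⟩
    have hAF' : ∀ I ∈ A k, I ∈ F' := fun I hI => (Finset.mem_filter.1 hI).1
    have hAprop : ∀ I ∈ A k,
        volume (dyadicCube n I) / 2 < volume (dyadicCube n I ∩ Ω k) ∧
        volume (dyadicCube n I ∩ Ω (k+1)) ≤ volume (dyadicCube n I) / 2 := by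
      intro I hI
      obtain ⟨hIF, hIk⟩ := Finset.mem_filter.1 hI
      have := hkfun I hIF
      rwa [hIk] at this
    obtain ⟨Mf, hMf1, hMf2⟩ := cover (A k) (Ω k) (hΩm k) (hΩfin k)
      (fun I hI => (hAprop I hI).1)
    have hMsum : ∑ M ∈ (A k).image Mf, volume (dyadicCube n M) ≤ 2 * volume (Ω k) :=
      hMf2 hAne
    -- (β) Carleson estimate
    have hbsum : ∑ I ∈ A k, ENNReal.ofReal (b I ^ 2) ≤
        ENNReal.ofReal (B ^ 2) * (2 * volume (Ω k)) := by
      rw [← Finset.sum_fiberwise_of_maps_to (fun I hI => Finset.mem_image_of_mem Mf hI)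
        (fun I => ENNReal.ofReal (b I ^ 2))]
      calc ∑ M ∈ (A k).image Mf, ∑ I ∈ (A k).filter (fun I => Mf I = M),
              ENNReal.ofReal (b I ^ 2)
          ≤ ∑ M ∈ (A k).image Mf, ENNReal.ofReal (B ^ 2) * volume (dyadicCube n M) := by
            refine Finset.sum_le_sum fun M hM => ?_
            refine le_trans ?_ (hCar M)
            have hsubM : ∀ I ∈ (A k).filter (fun I => Mf I = M),
                dyadicCube n I ⊆ dyadicCube n M := by
              intro I hI
              obtain ⟨hI1, hI2⟩ := Finset.mem_filter.1 hI
              rw [← hI2]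
              exact hMf1 I hI1
            set FS : Finset {J // dyadicCube n J ⊆ dyadicCube n M} :=
              ((A k).filter (fun I => Mf I = M)).attach.map
                ⟨fun I => ⟨I.1, hsubM I.1 I.2⟩, fun x y h => Subtype.ext (by
                  have := congrArg Subtype.val h
                  simpa using this)⟩
              with hFSdef
            have : ∑ I ∈ (A k).filter (fun I => Mf I = M), ENNReal.ofReal (b I ^ 2)
                = ∑ J ∈ FS, ENNReal.ofReal (b J.1 ^ 2) := by
              rw [hFSdef, Finset.sum_map]
              exact (Finset.sum_attach _ _).symm
            rw [this]
            exact ENNReal.sum_le_tsum FS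
        _ = ENNReal.ofReal (B ^ 2) * ∑ M ∈ (A k).image Mf, volume (dyadicCube n M) := by
            rw [Finset.mul_sum]
        _ ≤ ENNReal.ofReal (B ^ 2) * (2 * volume (Ω k)) := mul_le_mul_right hMsum _
    -- (α) square function estimate
    have hasum : ∑ I ∈ A k, ENNReal.ofReal (a I ^ 2) ≤
        2 * (((2:ENNReal) ^ (k+1)) ^ (2:ℕ) * (2 * volume (Ω k))) := by
      have hterm : ∀ I ∈ A k, ENNReal.ofReal (a I ^ 2) ≤
          2 * (q I * volume (dyadicCube n I \ Ω (k+1))) := by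
        intro I hI
        have hvol0 : volume (dyadicCube n I) ≠ 0 := (volume_cube_pos I).ne'
        have hvolt : volume (dyadicCube n I) ≠ ⊤ := (volume_cube_lt_top I).ne
        have hdiff : volume (dyadicCube n I) / 2 ≤ volume (dyadicCube n I \ Ω (k+1)) := by
          by_contra h'
          push_neg at h'
          have hsum : volume (dyadicCube n I \ Ω (k+1)) + volume (dyadicCube n I ∩ Ω (k+1))
              = volume (dyadicCube n I) := measure_diff_add_inter _ (hΩm (k+1))
          have : volume (dyadicCube n I) < volume (dyadicCube n I) := by
            conv_lhs => rw [← hsum]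
            calc volume (dyadicCube n I \ Ω (k+1)) + volume (dyadicCube n I ∩ Ω (k+1))
                < volume (dyadicCube n I) / 2 + volume (dyadicCube n I) / 2 :=
                  ENNReal.add_lt_add_of_lt_of_le
                    (ne_top_of_le_ne_top hvolt (measure_mono Set.inter_subset_left))
                    h' (hAprop I hI).2
              _ = volume (dyadicCube n I) := ENNReal.add_halves _
          exact absurd this (lt_irrefl _)
        have hq2 : q I * (volume (dyadicCube n I) / 2) = ENNReal.ofReal (a I ^ 2) * 2⁻¹ := by
          rw [hqdef]
          rw [div_eq_mul_inv, mul_assoc, ← mul_assoc (volume (dyadicCube n I))⁻¹,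
            ENNReal.inv_mul_cancel hvol0 hvolt, one_mul]
        calc ENNReal.ofReal (a I ^ 2)
            = 2 * (ENNReal.ofReal (a I ^ 2) * 2⁻¹) := by
              rw [mul_comm (ENNReal.ofReal (a I ^ 2)), ← mul_assoc,
                ENNReal.mul_inv_cancel (by norm_num) ENNReal.ofNat_ne_top, one_mul]
          _ = 2 * (q I * (volume (dyadicCube n I) / 2)) := by rw [hq2]
          _ ≤ 2 * (q I * volume (dyadicCube n I \ Ω (k+1))) :=
              mul_le_mul_right (mul_le_mul_right hdiff _) _
      have hmeas : ∀ I : ℤ × (Fin n → ℤ),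
          MeasurableSet (dyadicCube n I \ Ω (k+1)) :=
        fun I => (measurableSet_cube I).diff (hΩm (k+1))
      calc ∑ I ∈ A k, ENNReal.ofReal (a I ^ 2)
          ≤ ∑ I ∈ A k, 2 * (q I * volume (dyadicCube n I \ Ω (k+1))) :=
            Finset.sum_le_sum hterm
        _ = 2 * ∑ I ∈ A k, q I * volume (dyadicCube n I \ Ω (k+1)) := by
            rw [Finset.mul_sum]
        _ = 2 * ∑ I ∈ A k, ∫⁻ x, (dyadicCube n I \ Ω (k+1)).indicator (fun _ => q I) x := by
            congr 1
            refine Finset.sum_congr rfl fun I _ => ?_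
            rw [lintegral_indicator_const (hmeas I)]
        _ = 2 * ∫⁻ x, ∑ I ∈ A k, (dyadicCube n I \ Ω (k+1)).indicator (fun _ => q I) x := by
            rw [lintegral_finset_sum _ (fun I _ => measurable_const.indicator (hmeas I))]
        _ ≤ 2 * ∫⁻ x, ((⋃ M ∈ (A k).image Mf, dyadicCube n M) \ Ω (k+1)).indicator
              (fun _ => ((2:ENNReal) ^ (k+1)) ^ (2:ℕ)) x := by
            refine mul_le_mul_right (lintegral_mono fun x => ?_) _
            by_cases hxΩ : x ∈ Ω (k+1)
            · have h0 : ∀ I ∈ A k, (dyadicCube n I \ Ω (k+1)).indicator (fun _ => q I) x = 0 :=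
                fun I _ => Set.indicator_of_notMem (fun hx => hx.2 hxΩ) _
              rw [Finset.sum_eq_zero h0]
              exact zero_le
            by_cases hxE : ∃ I ∈ A k, x ∈ dyadicCube n I
            · obtain ⟨I₁, hI₁, hxI₁⟩ := hxE
              have hsx : S x ≤ 2 ^ (k+1) := by
                by_contra h'
                exact hxΩ (by push_neg at h'; exact h')
              have hs2x : s2 x ≤ ((2:ENNReal) ^ (k+1)) ^ (2:ℕ) := by
                have : s2 x = (S x) ^ (2:ℕ) := (sq_rpow_half (s2 x)).symm
                rw [this]
                exact pow_le_pow_left' hsx 2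
              have hub : ∑ I ∈ A k, (dyadicCube n I \ Ω (k+1)).indicator (fun _ => q I) x
                  ≤ s2 x := by
                refine le_trans (Finset.sum_le_sum fun I _ => ?_)
                  (Finset.sum_le_sum_of_subset (fun I hI => hAF' I hI))
                exact Set.indicator_le_indicator_of_subset Set.diff_subset
                  (fun _ => zero_le) x
              have hxmem : x ∈ (⋃ M ∈ (A k).image Mf, dyadicCube n M) \ Ω (k+1) := by
                refine ⟨Set.mem_biUnion (Finset.mem_image_of_mem Mf hI₁) (hMf1 I₁ hI₁ hxI₁), hxΩ⟩
              rw [Set.indicator_of_mem hxmem]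
              exact hub.trans hs2x
            · push_neg at hxE
              have h0 : ∀ I ∈ A k, (dyadicCube n I \ Ω (k+1)).indicator (fun _ => q I) x = 0 :=
                fun I hI => Set.indicator_of_notMem (fun hx => hxE I hI hx.1) _
              rw [Finset.sum_eq_zero h0]
              exact zero_le
        _ = 2 * (((2:ENNReal) ^ (k+1)) ^ (2:ℕ) *
              volume ((⋃ M ∈ (A k).image Mf, dyadicCube n M) \ Ω (k+1))) := by
            rw [lintegral_indicator_const
              (((A k).image Mf).measurableSet_biUnion (fun M _ => measurableSet_cube M)
                |>.diff (hΩm (k+1)))]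
        _ ≤ 2 * (((2:ENNReal) ^ (k+1)) ^ (2:ℕ) * (2 * volume (Ω k))) := by
            refine mul_le_mul_right (mul_le_mul_right ?_ _) _
            refine le_trans (measure_mono Set.diff_subset) ?_
            refine le_trans (measure_biUnion_finset_le _ _) hMsum
    -- Cauchy-Schwarz
    have hcs := finset_cauchy_schwarz (A k) (fun I => ENNReal.ofReal |a I|)
      (fun I => ENNReal.ofReal |b I|)
    have hsq : ∀ c : ℝ, (ENNReal.ofReal |c|) ^ (2:ℕ) = ENNReal.ofReal (c ^ 2) := by
      intro c
      rw [← ENNReal.ofReal_pow (abs_nonneg c), sq_abs]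
    have hlhs : ∀ I, ENNReal.ofReal |a I| * ENNReal.ofReal |b I|
        = ENNReal.ofReal (|a I| * |b I|) :=
      fun I => (ENNReal.ofReal_mul (abs_nonneg _)).symm
    simp only [hlhs, hsq] at hcs
    set X := volume (Ω k) with hXdef
    have hXt : X ≠ ⊤ := hΩfin k
    have hbb : ENNReal.ofReal (B ^ 2) = β ^ (2:ℕ) := by
      rw [hβdef, ← ENNReal.ofReal_pow hB]
    calc ∑ I ∈ A k, ENNReal.ofReal (|a I| * |b I|)
        ≤ (∑ I ∈ A k, ENNReal.ofReal (a I ^ 2)) ^ (1/2:ℝ) *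
          (∑ I ∈ A k, ENNReal.ofReal (b I ^ 2)) ^ (1/2:ℝ) := hcs
      _ ≤ (2 * (((2:ENNReal) ^ (k+1)) ^ (2:ℕ) * (2 * X))) ^ (1/2:ℝ) *
          (β ^ (2:ℕ) * (2 * X)) ^ (1/2:ℝ) := by
            refine mul_le_mul' (ENNReal.rpow_le_rpow hasum (by norm_num)) ?_
            refine ENNReal.rpow_le_rpow ?_ (by norm_num)
            rw [← hbb]
            exact hbsum
      _ = ((2 * (((2:ENNReal) ^ (k+1)) ^ (2:ℕ) * (2 * X))) *
          (β ^ (2:ℕ) * (2 * X))) ^ (1/2:ℝ) :=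
            (ENNReal.mul_rpow_of_nonneg _ _ (by norm_num)).symm
      _ ≤ ((6 * ((2:ENNReal) ^ k * (β * X))) ^ (2:ℕ)) ^ (1/2:ℝ) := by
            refine ENNReal.rpow_le_rpow ?_ (by norm_num)
            have hk1 : (2:ENNReal) ^ (k+1) = 2 ^ k * 2 :=
              by rw [ENNReal.zpow_add (by norm_num) ENNReal.ofNat_ne_top, zpow_one]
            have e1 : (2 * ((((2:ENNReal)^k * 2)) ^ (2:ℕ) * (2 * X))) * (β ^ (2:ℕ) * (2 * X))
                = 32 * ((2:ENNReal)^k * (β * X)) ^ (2:ℕ) := by ring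
            have e2 : (6 * ((2:ENNReal) ^ k * (β * X))) ^ (2:ℕ)
                = 36 * ((2:ENNReal)^k * (β * X)) ^ (2:ℕ) := by ring
            rw [hk1, e1, e2]
            exact mul_le_mul_left (by norm_num) _
      _ = 6 * ((2:ENNReal) ^ k * (β * X)) := rpow_half_sq _
  -- summation over levels
  have hsum : ∑ k ∈ ks, (2:ENNReal) ^ k * volume (Ω k) ≤ 2 * ∫⁻ x, S x := by
    calc ∑ k ∈ ks, (2:ENNReal) ^ k * volume (Ω k)
        = ∑ k ∈ ks, ∫⁻ x, (Ω k).indicator (fun _ => (2:ENNReal) ^ k) x := by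
          refine Finset.sum_congr rfl fun k _ => ?_
          rw [lintegral_indicator_const (hΩm k)]
      _ = ∫⁻ x, ∑ k ∈ ks, (Ω k).indicator (fun _ => (2:ENNReal) ^ k) x := by
          rw [lintegral_finset_sum _ (fun k _ => measurable_const.indicator (hΩm k))]
      _ ≤ ∫⁻ x, 2 * S x := by
          refine lintegral_mono fun x => ?_
          have heq : ∑ k ∈ ks, (Ω k).indicator (fun _ => (2:ENNReal) ^ k) x
              = ∑ k ∈ ks.filter (fun k => x ∈ Ω k), (2:ENNReal) ^ k := by
            rw [Finset.sum_filter]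
            refine Finset.sum_congr rfl fun k _ => ?_
            by_cases hx : x ∈ Ω k <;> simp [hx, Set.indicator_of_mem, Set.indicator_of_notMem]
          rw [heq]
          rcases (ks.filter (fun k => x ∈ Ω k)).eq_empty_or_nonempty with he | hne
          · rw [he]; simp
          · set K := (ks.filter (fun k => x ∈ Ω k)).max' hne with hKdef
            have hKmem : K ∈ ks.filter (fun k => x ∈ Ω k) := Finset.max'_mem _ hne
            have hKx : x ∈ Ω K := (Finset.mem_filter.1 hKmem).2
            calc ∑ k ∈ ks.filter (fun k => x ∈ Ω k), (2:ENNReal) ^ k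
                ≤ 2 ^ (K + 1) := finset_zpow_sum_le _ K (fun k hk => Finset.le_max' _ k hk)
              _ = 2 * 2 ^ K := by
                  rw [ENNReal.zpow_add (by norm_num) ENNReal.ofNat_ne_top, zpow_one, mul_comm]
              _ ≤ 2 * S x := mul_le_mul_right (le_of_lt hKx) _
      _ = 2 * ∫⁻ x, S x := lintegral_const_mul 2 hSm
  -- assemble
  calc ∑ I ∈ F', ENNReal.ofReal (|a I| * |b I|)
      = ∑ k ∈ ks, ∑ I ∈ A k, ENNReal.ofReal (|a I| * |b I|) :=
        (Finset.sum_fiberwise_of_maps_to (fun I hI => Finset.mem_image_of_mem kfun hI) _).symm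
    _ ≤ ∑ k ∈ ks, 6 * ((2:ENNReal) ^ k * (β * volume (Ω k))) :=
        Finset.sum_le_sum perk
    _ = 6 * β * ∑ k ∈ ks, (2:ENNReal) ^ k * volume (Ω k) := by
        rw [Finset.mul_sum]
        refine Finset.sum_congr rfl fun k _ => ?_
        ring
    _ ≤ 6 * β * (2 * ∫⁻ x, S x) := mul_le_mul_right hsum _
    _ = ENNReal.ofReal (12 * B) * ∫⁻ x, S x := by
        rw [ENNReal.ofReal_mul (by norm_num), ENNReal.ofReal_ofNat, hβdef]
        ring
end KEY


/-- Frazier–Jawerth duality inequality between the discrete square-function (ℋ¹) norm of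
`(a_I)` and the Carleson/BMO norm of `(b_I)`. -/
theorem frazier_jawerth_duality (n : ℕ) :
    ∃ C : ℝ, 0 < C ∧ ∀ (a b : ℤ × (Fin n → ℤ) → ℝ) (B : ℝ), 0 ≤ B →
      (∀ R : ℤ × (Fin n → ℤ),
        (∑' I : {I : ℤ × (Fin n → ℤ) // dyadicCube n I ⊆ dyadicCube n R},
            ENNReal.ofReal (b I.1 ^ 2))
          ≤ ENNReal.ofReal (B ^ 2) * volume (dyadicCube n R)) →
      (∑' I : ℤ × (Fin n → ℤ), ENNReal.ofReal (|a I| * |b I|)) ≤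
        ENNReal.ofReal (C * B) *
          ∫⁻ x, (∑' I : ℤ × (Fin n → ℤ),
            (dyadicCube n I).indicator
              (fun _ => ENNReal.ofReal (a I ^ 2) * (volume (dyadicCube n I))⁻¹) x)
            ^ (1 / 2 : ℝ) := by
  refine ⟨12, by norm_num, ?_⟩
  intro a b B hB hCar
  rw [ENNReal.tsum_eq_iSup_sum]
  refine iSup_le fun F => ?_
  refine (key a b B hB hCar F).trans ?_
  refine mul_le_mul_right (lintegral_mono fun x => ?_) _
  refine ENNReal.rpow_le_rpow ?_ (by norm_num)
  exact ENNReal.sum_le_tsum F
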